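/- The family of bounded natural transformations between *-functors of small C*-categories forms a Longo-Roberts 2-C*-category: with pointwise vertical composition, Godement horizontal composition, pointwise *₁ involution, pointwise linear structure, and supremum norm, each block of natural transformations between a fixed pair of *-functors is a Banach space, the norm is submultiplicative for both compositions, the C*-property ‖Φ^{*₁} ∘₁ Φ‖ = ‖Φ‖² holds, and Φ^{*₁} ∘₁ Φ is positive. -/

import Mathlib

/-- A (small) C*-category: an involutive algebroid over ℂ whose hom-blocks are
Banach spaces, with bilinear composition, conjugate-linear contravariant
involution acting trivially on objects, submultiplicative norm, C*-property
and positivity. -/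
structure CStarCat where
  Obj : Type
  Hom : Obj → Obj → Type
  comp : ∀ {A B C : Obj}, Hom B C → Hom A B → Hom A C
  id : ∀ A : Obj, Hom A A
  star : ∀ {A B : Obj}, Hom A B → Hom B A
  add : ∀ {A B : Obj}, Hom A B → Hom A B → Hom A B
  neg : ∀ {A B : Obj}, Hom A B → Hom A B
  zero : ∀ A B : Obj, Hom A B
  smul : ∀ {A B : Obj}, ℂ → Hom A B → Hom A B
  norm : ∀ {A B : Obj}, Hom A B → ℝ
  -- category axioms
  comp_assoc : ∀ {A B C D : Obj} (h : Hom C D) (g : Hom B C) (f : Hom A B),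
    comp (comp h g) f = comp h (comp g f)
  id_comp : ∀ {A B : Obj} (f : Hom A B), comp (id B) f = f
  comp_id : ∀ {A B : Obj} (f : Hom A B), comp f (id A) = f
  -- involution axioms
  star_star : ∀ {A B : Obj} (f : Hom A B), star (star f) = f
  star_comp : ∀ {A B C : Obj} (g : Hom B C) (f : Hom A B),
    star (comp g f) = comp (star f) (star g)
  star_id : ∀ A : Obj, star (id A) = id A
  -- complex vector space axioms on hom-blocks
  add_assoc' : ∀ {A B : Obj} (f g h : Hom A B), add (add f g) h = add f (add g h)
  add_comm' : ∀ {A B : Obj} (f g : Hom A B), add f g = add g f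
  zero_add' : ∀ {A B : Obj} (f : Hom A B), add (zero A B) f = f
  add_neg' : ∀ {A B : Obj} (f : Hom A B), add f (neg f) = zero A B
  one_smul' : ∀ {A B : Obj} (f : Hom A B), smul 1 f = f
  mul_smul' : ∀ {A B : Obj} (c d : ℂ) (f : Hom A B), smul (c * d) f = smul c (smul d f)
  smul_add' : ∀ {A B : Obj} (c : ℂ) (f g : Hom A B), smul c (add f g) = add (smul c f) (smul c g)
  add_smul' : ∀ {A B : Obj} (c d : ℂ) (f : Hom A B), smul (c + d) f = add (smul c f) (smul d f)
  -- bilinearity of composition, conjugate-linearity of the involution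
  comp_add_left : ∀ {A B C : Obj} (g : Hom B C) (f₁ f₂ : Hom A B),
    comp g (add f₁ f₂) = add (comp g f₁) (comp g f₂)
  comp_add_right : ∀ {A B C : Obj} (g₁ g₂ : Hom B C) (f : Hom A B),
    comp (add g₁ g₂) f = add (comp g₁ f) (comp g₂ f)
  comp_smul_left : ∀ {A B C : Obj} (g : Hom B C) (c : ℂ) (f : Hom A B),
    comp g (smul c f) = smul c (comp g f)
  comp_smul_right : ∀ {A B C : Obj} (c : ℂ) (g : Hom B C) (f : Hom A B),
    comp (smul c g) f = smul c (comp g f)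
  star_add : ∀ {A B : Obj} (f g : Hom A B), star (add f g) = add (star f) (star g)
  star_smul : ∀ {A B : Obj} (c : ℂ) (f : Hom A B),
    star (smul c f) = smul (starRingEnd ℂ c) (star f)
  -- norm axioms
  norm_nonneg' : ∀ {A B : Obj} (f : Hom A B), 0 ≤ norm f
  norm_eq_zero' : ∀ {A B : Obj} (f : Hom A B), norm f = 0 ↔ f = zero A B
  norm_add_le' : ∀ {A B : Obj} (f g : Hom A B), norm (add f g) ≤ norm f + norm g
  norm_smul' : ∀ {A B : Obj} (c : ℂ) (f : Hom A B), norm (smul c f) = ‖c‖ * norm f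
  norm_comp_le : ∀ {A B C : Obj} (g : Hom B C) (f : Hom A B),
    norm (comp g f) ≤ norm g * norm f
  cstar_property : ∀ {A B : Obj} (f : Hom A B), norm (comp (star f) f) = norm f ^ 2
  -- completeness of the hom-blocks
  complete : ∀ {A B : Obj} (u : ℕ → Hom A B),
    (∀ ε : ℝ, 0 < ε → ∃ N, ∀ m n, N ≤ m → N ≤ n → norm (add (u m) (neg (u n))) ≤ ε) →
    ∃ l : Hom A B, ∀ ε : ℝ, 0 < ε → ∃ N, ∀ m, N ≤ m → norm (add (u m) (neg l)) ≤ ε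
  -- positivity: `f* ∘ f` is positive in the C*-algebra `Hom A A`
  positivity : ∀ {A B : Obj} (f : Hom A B), ∃ g : Hom A A, comp (star f) f = comp (star g) g

/-- A *-functor between C*-categories. -/
structure SFun (Q R : CStarCat) where
  obj : Q.Obj → R.Obj
  map : ∀ {A B : Q.Obj}, Q.Hom A B → R.Hom (obj A) (obj B)
  map_comp : ∀ {A B C : Q.Obj} (g : Q.Hom B C) (f : Q.Hom A B),
    map (Q.comp g f) = R.comp (map g) (map f)
  map_id : ∀ A : Q.Obj, map (Q.id A) = R.id (obj A)
  map_star : ∀ {A B : Q.Obj} (f : Q.Hom A B), map (Q.star f) = R.star (map f)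
  map_add : ∀ {A B : Q.Obj} (f g : Q.Hom A B), map (Q.add f g) = R.add (map f) (map g)
  map_smul : ∀ {A B : Q.Obj} (c : ℂ) (f : Q.Hom A B), map (Q.smul c f) = R.smul c (map f)

/-- Composition of *-functors. -/
def SFun.fcomp {Q R E : CStarCat} (G : SFun R E) (F : SFun Q R) : SFun Q E where
  obj A := G.obj (F.obj A)
  map f := G.map (F.map f)
  map_comp g f := by rw [F.map_comp, G.map_comp]
  map_id A := by rw [F.map_id, G.map_id]
  map_star f := by rw [F.map_star, G.map_star]
  map_add f g := by rw [F.map_add, G.map_add]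
  map_smul c f := by rw [F.map_smul, G.map_smul]

/-- The underlying family of a transformation between the *-functors `φ, ψ`. -/
def NT {Q R : CStarCat} (φ ψ : SFun Q R) : Type :=
  ∀ A : Q.Obj, R.Hom (φ.obj A) (ψ.obj A)

/-- Naturality of a transformation. -/
def IsNat {Q R : CStarCat} (φ ψ : SFun Q R) (Θ : NT φ ψ) : Prop :=
  ∀ {A B : Q.Obj} (f : Q.Hom A B), R.comp (ψ.map f) (Θ A) = R.comp (Θ B) (φ.map f)

/-- Boundedness of a transformation. -/
def Bdd {Q R : CStarCat} (φ ψ : SFun Q R) (Θ : NT φ ψ) : Prop :=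
  ∃ M : ℝ, ∀ A : Q.Obj, R.norm (Θ A) ≤ M

/-- The supremum norm of a transformation. -/
noncomputable def supNorm {Q R : CStarCat} (φ ψ : SFun Q R) (Θ : NT φ ψ) : ℝ :=
  sSup (Set.range fun A : Q.Obj => R.norm (Θ A))

/-- Pointwise vertical composition: `(Φ ∘₁ Ψ)_o := Φ_o ∘ Ψ_o`. -/
def vc {Q R : CStarCat} {φ ψ ξ : SFun Q R} (Θ : NT ψ ξ) (Ξ : NT φ ψ) : NT φ ξ :=
  fun A => R.comp (Θ A) (Ξ A)

/-- Godement horizontal composition: `(Ω ∘₀ Θ)_o := ψ₂(Θ_o) ∘ Ω_{φ₁(o)}`. -/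
def hc {Q R E : CStarCat} {φ₁ ψ₁ : SFun Q R} {φ₂ ψ₂ : SFun R E}
    (Ω : NT φ₂ ψ₂) (Θ : NT φ₁ ψ₁) : NT (φ₂.fcomp φ₁) (ψ₂.fcomp ψ₁) :=
  fun A => E.comp (ψ₂.map (Θ A)) (Ω (φ₁.obj A))

/-- Pointwise involution `(Φ^{*₁})_o := (Φ_o)*`. -/
def starN {Q R : CStarCat} {φ ψ : SFun Q R} (Θ : NT φ ψ) : NT ψ φ :=
  fun A => R.star (Θ A)

/-- Pointwise addition. -/
def addN {Q R : CStarCat} {φ ψ : SFun Q R} (Θ Ξ : NT φ ψ) : NT φ ψ :=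
  fun A => R.add (Θ A) (Ξ A)

/-- Pointwise negation. -/
def negN {Q R : CStarCat} {φ ψ : SFun Q R} (Θ : NT φ ψ) : NT φ ψ :=
  fun A => R.neg (Θ A)

/-- Pointwise scalar multiplication. -/
def smulN {Q R : CStarCat} {φ ψ : SFun Q R} (c : ℂ) (Θ : NT φ ψ) : NT φ ψ :=
  fun A => R.smul c (Θ A)

namespace CStarCat

variable {R : CStarCat}

/-! ### Raw algebraic helper lemmas -/

lemma add_cancel {A B : R.Obj} {x y z : R.Hom A B}
    (h : R.add x y = R.add x z) : y = z := by
  have e : R.add (R.neg x) x = R.zero A B := by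
    rw [R.add_comm']; exact R.add_neg' x
  have h1 : R.add (R.neg x) (R.add x y) = R.add (R.neg x) (R.add x z) := by rw [h]
  rwa [← R.add_assoc', ← R.add_assoc', e, R.zero_add', R.zero_add'] at h1

lemma zero_smul'' {A B : R.Obj} (f : R.Hom A B) : R.smul 0 f = R.zero A B := by
  have h : R.add (R.smul 0 f) (R.smul 0 f) = R.add (R.smul 0 f) (R.zero A B) := by
    rw [← R.add_smul']
    norm_num
    rw [R.add_comm', R.zero_add']
  exact add_cancel h

lemma smul_zero'' {A B : R.Obj} (c : ℂ) : R.smul c (R.zero A B) = R.zero A B := by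
  have h : R.add (R.smul c (R.zero A B)) (R.smul c (R.zero A B))
      = R.add (R.smul c (R.zero A B)) (R.zero A B) := by
    rw [← R.smul_add', R.zero_add', R.add_comm', R.zero_add']
  exact add_cancel h

lemma neg_eq_smul'' {A B : R.Obj} (f : R.Hom A B) : R.neg f = R.smul (-1) f := by
  apply add_cancel (x := f)
  rw [R.add_neg']
  have h : R.add (R.smul 1 f) (R.smul (-1) f) = R.zero A B := by
    rw [← R.add_smul']; norm_num; exact zero_smul'' f
  rw [← h, R.one_smul']

lemma norm_neg'' {A B : R.Obj} (f : R.Hom A B) : R.norm (R.neg f) = R.norm f := by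
  rw [neg_eq_smul'', R.norm_smul']
  simp

lemma norm_zero'' (A B : R.Obj) : R.norm (R.zero A B) = 0 :=
  (R.norm_eq_zero' _).mpr rfl

lemma eq_of_sub_eq_zero'' {A B : R.Obj} {x y : R.Hom A B}
    (h : R.add x (R.neg y) = R.zero A B) : x = y := by
  have h1 : R.add (R.add x (R.neg y)) y = R.add (R.zero A B) y := by rw [h]
  rwa [R.add_assoc', R.add_comm' (R.neg y) y, R.add_neg', R.add_comm' x, R.zero_add',
    R.zero_add'] at h1

lemma zero_comp'' {A B C : R.Obj} (f : R.Hom A B) :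
    R.comp (R.zero B C) f = R.zero A C := by
  rw [← zero_smul'' (R.zero B C), R.comp_smul_right, zero_smul'']

lemma comp_zero'' {A B C : R.Obj} (g : R.Hom B C) :
    R.comp g (R.zero A B) = R.zero A C := by
  rw [← zero_smul'' (R.zero A B), R.comp_smul_left, zero_smul'']

lemma norm_star'' {A B : R.Obj} (f : R.Hom A B) : R.norm (R.star f) = R.norm f := by
  have key : ∀ {A B : R.Obj} (f : R.Hom A B), R.norm f ≤ R.norm (R.star f) := by
    intro A B f
    rcases (R.norm_nonneg' f).eq_or_lt with h | h
    · rw [← h]; exact R.norm_nonneg' _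
    · have h1 : R.norm f ^ 2 ≤ R.norm (R.star f) * R.norm f := by
        rw [← R.cstar_property f]; exact R.norm_comp_le _ _
      rw [pow_two] at h1
      exact le_of_mul_le_mul_right h1 h
  refine le_antisymm ?_ (key f)
  have h2 := key (R.star f)
  rwa [R.star_star] at h2

/-! ### Bundled instances on the hom-blocks -/

instance instZeroHom (X Y : R.Obj) : Zero (R.Hom X Y) := ⟨R.zero X Y⟩
instance instAddHom (X Y : R.Obj) : Add (R.Hom X Y) := ⟨R.add⟩
instance instNegHom (X Y : R.Obj) : Neg (R.Hom X Y) := ⟨R.neg⟩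
instance instSubHom (X Y : R.Obj) : Sub (R.Hom X Y) := ⟨fun f g => R.add f (R.neg g)⟩
instance instSMulHom (X Y : R.Obj) : SMul ℂ (R.Hom X Y) := ⟨R.smul⟩
noncomputable instance instNormHom (X Y : R.Obj) : Norm (R.Hom X Y) := ⟨R.norm⟩
instance instMulHom (X : R.Obj) : Mul (R.Hom X X) := ⟨R.comp⟩
instance instOneHom (X : R.Obj) : One (R.Hom X X) := ⟨R.id X⟩
instance instStarHom (X : R.Obj) : Star (R.Hom X X) := ⟨R.star⟩

@[simp] lemma norm_def {X Y : R.Obj} (f : R.Hom X Y) : ‖f‖ = R.norm f := rfl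
@[simp] lemma add_def {X Y : R.Obj} (f g : R.Hom X Y) : f + g = R.add f g := rfl
@[simp] lemma neg_def {X Y : R.Obj} (f : R.Hom X Y) : -f = R.neg f := rfl
@[simp] lemma sub_def {X Y : R.Obj} (f g : R.Hom X Y) : f - g = R.add f (R.neg g) := rfl
@[simp] lemma zero_def {X Y : R.Obj} : (0 : R.Hom X Y) = R.zero X Y := rfl
@[simp] lemma smul_def {X Y : R.Obj} (c : ℂ) (f : R.Hom X Y) : c • f = R.smul c f := rfl
@[simp] lemma mul_def {X : R.Obj} (f g : R.Hom X X) : f * g = R.comp f g := rfl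
@[simp] lemma one_def {X : R.Obj} : (1 : R.Hom X X) = R.id X := rfl
@[simp] lemma star_def {X : R.Obj} (f : R.Hom X X) : Star.star f = R.star f := rfl

instance instAddCommGroupHom (X Y : R.Obj) : AddCommGroup (R.Hom X Y) where
  add_assoc := R.add_assoc'
  add_comm := R.add_comm'
  zero_add := R.zero_add'
  add_zero f := by show R.add f (R.zero X Y) = f; rw [R.add_comm']; exact R.zero_add' f
  neg_add_cancel f := by
    show R.add (R.neg f) f = R.zero X Y
    rw [R.add_comm']; exact R.add_neg' f
  sub_eq_add_neg _ _ := rfl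
  nsmul := nsmulRec
  zsmul := zsmulRec

instance instModuleHom (X Y : R.Obj) : Module ℂ (R.Hom X Y) where
  one_smul := R.one_smul'
  mul_smul := R.mul_smul'
  smul_add := R.smul_add'
  add_smul := R.add_smul'
  smul_zero c := smul_zero'' c
  zero_smul := zero_smul''

noncomputable instance instNormedAddCommGroupHom (X Y : R.Obj) :
    NormedAddCommGroup (R.Hom X Y) :=
  AddGroupNorm.toNormedAddCommGroup
    { toFun := R.norm
      map_zero' := norm_zero'' X Y
      add_le' := R.norm_add_le'
      neg' := norm_neg''
      eq_zero_of_map_eq_zero' := fun f h => (R.norm_eq_zero' f).mp h }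

noncomputable instance instNormedSpaceHom (X Y : R.Obj) : NormedSpace ℂ (R.Hom X Y) :=
  ⟨fun c f => le_of_eq (R.norm_smul' c f)⟩

instance instRingHom (X : R.Obj) : Ring (R.Hom X X) := {
  instAddCommGroupHom X X with
  mul := R.comp
  one := R.id X
  mul_assoc := R.comp_assoc
  one_mul := R.id_comp
  mul_one := R.comp_id
  left_distrib := R.comp_add_left
  right_distrib := R.comp_add_right
  zero_mul := zero_comp''
  mul_zero := comp_zero'' }

instance instStarRingHom (X : R.Obj) : StarRing (R.Hom X X) := {
  star_involutive := R.star_star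
  star_mul := R.star_comp
  star_add := R.star_add }

instance instStarModuleHom (X : R.Obj) : StarModule ℂ (R.Hom X X) :=
  ⟨fun c f => R.star_smul c f⟩

noncomputable instance instNormedRingHom (X : R.Obj) : NormedRing (R.Hom X X) :=
  { instNormedAddCommGroupHom X X, instRingHom X with
    dist_eq := fun f g => rfl
    norm_mul_le := R.norm_comp_le }

instance instCStarRingHom (X : R.Obj) : CStarRing (R.Hom X X) where
  norm_mul_self_le f := by
    show R.norm f * R.norm f ≤ R.norm (R.comp (R.star f) f)
    rw [R.cstar_property, pow_two]

noncomputable instance instAlgebraHom (X : R.Obj) : Algebra ℂ (R.Hom X X) :=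
  Algebra.ofModule
    (fun c x y => by
      show R.comp (R.smul c x) y = R.smul c (R.comp x y)
      exact R.comp_smul_right c x y)
    (fun c x y => by
      show R.comp x (R.smul c y) = R.smul c (R.comp x y)
      exact R.comp_smul_left x c y)

noncomputable instance instNormedAlgebraHom (X : R.Obj) : NormedAlgebra ℂ (R.Hom X X) :=
  { instAlgebraHom X with
    norm_smul_le := fun c f => le_of_eq (R.norm_smul' c f) }

instance instCompleteSpaceHom (X Y : R.Obj) : CompleteSpace (R.Hom X Y) := by
  apply Metric.complete_of_cauchySeq_tendsto
  intro u hu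
  rw [Metric.cauchySeq_iff] at hu
  obtain ⟨l, hl⟩ := R.complete u (by
    intro ε hε
    obtain ⟨N, hN⟩ := hu ε hε
    exact ⟨N, fun m n hm hn => by
      have h := hN m hm n hn
      rw [dist_eq_norm] at h
      exact le_of_lt h⟩)
  refine ⟨l, Metric.tendsto_atTop.mpr fun ε hε => ?_⟩
  obtain ⟨N, hN⟩ := hl (ε / 2) (half_pos hε)
  refine ⟨N, fun m hm => ?_⟩
  have h := hN m hm
  rw [dist_eq_norm]
  exact lt_of_le_of_lt h (half_lt_self hε)

noncomputable instance instCStarAlgebraHom (X : R.Obj) : CStarAlgebra (R.Hom X X) where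

end CStarCat
/-! ### *-functors are contractive -/

/-- The restriction of a *-functor to an endomorphism algebra, as a
non-unital star algebra homomorphism. -/
noncomputable def SFun.nuHom {Q R : CStarCat} (φ : SFun Q R) (A : Q.Obj) :
    Q.Hom A A →⋆ₙₐ[ℂ] R.Hom (φ.obj A) (φ.obj A) where
  toFun := φ.map
  map_smul' := φ.map_smul
  map_zero' := by
    have h := φ.map_smul 0 (Q.zero A A)
    rwa [CStarCat.zero_smul'', CStarCat.zero_smul''] at h
  map_add' := φ.map_add
  map_mul' := φ.map_comp
  map_star' := φ.map_star

lemma SFun.norm_map_le {Q R : CStarCat} (φ : SFun Q R) {A B : Q.Obj} (f : Q.Hom A B) :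
    R.norm (φ.map f) ≤ Q.norm f := by
  have h1 : R.norm (φ.map f) ^ 2 = R.norm (φ.map (Q.comp (Q.star f) f)) := by
    rw [φ.map_comp, φ.map_star, R.cstar_property]
  have h2 : R.norm (φ.map (Q.comp (Q.star f) f)) ≤ Q.norm (Q.comp (Q.star f) f) :=
    NonUnitalStarAlgHom.norm_apply_le (φ.nuHom A) (Q.comp (Q.star f) f)
  have h3 : Q.norm (Q.comp (Q.star f) f) = Q.norm f ^ 2 := Q.cstar_property f
  nlinarith [R.norm_nonneg' (φ.map f), Q.norm_nonneg' f]

/-! ### sup-norm lemmas -/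

section Sup

variable {Q R : CStarCat} {φ ψ : SFun Q R}

lemma bddAbove_of_bdd {Θ : NT φ ψ} (h : Bdd φ ψ Θ) :
    BddAbove (Set.range fun A : Q.Obj => R.norm (Θ A)) := by
  obtain ⟨M, hM⟩ := h
  exact ⟨M, by rintro x ⟨A, rfl⟩; exact hM A⟩

lemma le_supNorm {Θ : NT φ ψ} (h : Bdd φ ψ Θ) (A : Q.Obj) :
    R.norm (Θ A) ≤ supNorm φ ψ Θ :=
  le_csSup (bddAbove_of_bdd h) ⟨A, rfl⟩

lemma supNorm_nonneg (Θ : NT φ ψ) : 0 ≤ supNorm φ ψ Θ :=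
  Real.sSup_nonneg (by rintro x ⟨A, rfl⟩; exact R.norm_nonneg' _)

lemma supNorm_le {Θ : NT φ ψ} {M : ℝ} (hM : 0 ≤ M) (h : ∀ A, R.norm (Θ A) ≤ M) :
    supNorm φ ψ Θ ≤ M :=
  Real.sSup_le (by rintro x ⟨A, rfl⟩; exact h A) hM

end Sup

/-- Supremum of squares of a nonnegative bounded family. -/
lemma sSup_sq_of_nonneg {ι : Type} (g : ι → ℝ) (hg : ∀ i, 0 ≤ g i)
    (hb : BddAbove (Set.range g)) :
    sSup (Set.range fun i => g i ^ 2) = sSup (Set.range g) ^ 2 := by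
  set S := sSup (Set.range g) with hS
  have hS0 : 0 ≤ S := Real.sSup_nonneg (by rintro x ⟨i, rfl⟩; exact hg i)
  have hTb : BddAbove (Set.range fun i => g i ^ 2) := by
    refine ⟨S ^ 2, ?_⟩
    rintro x ⟨i, rfl⟩
    exact pow_le_pow_left₀ (hg i) (le_csSup hb ⟨i, rfl⟩) 2
  set T := sSup (Set.range fun i => g i ^ 2) with hT
  have hT0 : 0 ≤ T := Real.sSup_nonneg (by rintro x ⟨i, rfl⟩; positivity)
  refine le_antisymm ?_ ?_
  · refine Real.sSup_le ?_ (by positivity)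
    rintro x ⟨i, rfl⟩
    exact pow_le_pow_left₀ (hg i) (le_csSup hb ⟨i, rfl⟩) 2
  · have hs : S ≤ Real.sqrt T := by
      refine Real.sSup_le ?_ (Real.sqrt_nonneg _)
      rintro x ⟨i, rfl⟩
      have h1 : g i = Real.sqrt (g i ^ 2) := by
        rw [Real.sqrt_sq (hg i)]
      rw [h1]
      exact Real.sqrt_le_sqrt (le_csSup hTb ⟨i, rfl⟩)
    calc S ^ 2 ≤ Real.sqrt T ^ 2 := pow_le_pow_left₀ hS0 hs 2
      _ = T := Real.sq_sqrt hT0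
namespace CStarCat

variable {R : CStarCat}

/-! ### More raw lemmas: composition and subtraction -/

lemma comp_neg'' {A B C : R.Obj} (g : R.Hom B C) (f : R.Hom A B) :
    R.comp g (R.neg f) = R.neg (R.comp g f) := by
  rw [neg_eq_smul'', neg_eq_smul'', R.comp_smul_left]

lemma neg_comp'' {A B C : R.Obj} (g : R.Hom B C) (f : R.Hom A B) :
    R.comp (R.neg g) f = R.neg (R.comp g f) := by
  rw [neg_eq_smul'', neg_eq_smul'', R.comp_smul_right]

lemma comp_sub'' {A B C : R.Obj} (g : R.Hom B C) (x y : R.Hom A B) :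
    R.comp g (x - y) = R.comp g x - R.comp g y := by
  show R.comp g (R.add x (R.neg y)) = R.add (R.comp g x) (R.neg (R.comp g y))
  rw [R.comp_add_left, comp_neg'']

lemma sub_comp'' {A B C : R.Obj} (x y : R.Hom B C) (f : R.Hom A B) :
    R.comp (x - y) f = R.comp x f - R.comp y f := by
  show R.comp (R.add x (R.neg y)) f = R.add (R.comp x f) (R.neg (R.comp y f))
  rw [R.comp_add_right, neg_comp'']

lemma norm_one_cases (X : R.Obj) :
    R.id X = R.zero X X ∨ R.norm (R.id X) = 1 := by
  have h := R.cstar_property (R.id X)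
  rw [R.star_id, R.id_comp] at h
  rcases eq_or_ne (R.norm (R.id X)) 0 with h0 | h0
  · exact Or.inl ((R.norm_eq_zero' _).mp h0)
  · right
    rw [pow_two] at h
    have h2 : R.norm (R.id X) * 1 = R.norm (R.id X) * R.norm (R.id X) := by
      rw [mul_one]; exact h
    exact (mul_left_cancel₀ h0 h2).symm

/-- The real spectrum of a selfadjoint element with nonnegative spectrum and norm at
most `M` is contained in `[0, M]`. -/
lemma spectrum_subset_Icc {X : R.Obj} {p : R.Hom X X}
    (hsp : ∀ x ∈ spectrum ℝ p, 0 ≤ x) {M : ℝ} (hM : R.norm p ≤ M) :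
    spectrum ℝ p ⊆ Set.Icc 0 M := by
  intro x hx
  refine ⟨hsp x hx, ?_⟩
  rcases norm_one_cases (R := R) X with h1 | h1
  · haveI : Subsingleton (R.Hom X X) :=
      subsingleton_of_zero_eq_one (show (0 : R.Hom X X) = 1 from h1.symm)
    exact absurd hx (by simp [spectrum.mem_iff, isUnit_of_subsingleton])
  · haveI : NormOneClass (R.Hom X X) := ⟨h1⟩
    have h2 : ‖x‖ ≤ ‖p‖ := spectrum.norm_le_norm_of_mem hx
    have h3 : |x| ≤ R.norm p := h2
    exact le_trans (le_abs_self x) (le_trans h3 hM)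

/-! ### Polynomial approximation of the square root -/

open Polynomial in
lemma exists_poly_sqrt (M : ℝ) (ε : ℝ) (hε : 0 < ε) :
    ∃ P : ℝ[X], ∀ x ∈ Set.Icc (0:ℝ) M, |P.eval x - Real.sqrt x| ≤ ε := by
  have h := polynomialFunctions_closure_eq_top 0 M
  set f : C(Set.Icc (0:ℝ) M, ℝ) :=
    ⟨fun x => Real.sqrt x, Real.continuous_sqrt.comp continuous_subtype_val⟩ with hf
  have hmem : f ∈ ((polynomialFunctions (Set.Icc (0:ℝ) M)).topologicalClosure : Set C(Set.Icc (0:ℝ) M, ℝ)) := by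
    rw [h]; trivial
  rw [Subalgebra.topologicalClosure_coe] at hmem
  obtain ⟨g, hg, hdist⟩ := Metric.mem_closure_iff.mp hmem ε hε
  rw [polynomialFunctions_coe] at hg
  obtain ⟨P, rfl⟩ := hg
  refine ⟨P, fun x hx => ?_⟩
  have h2 := ContinuousMap.dist_apply_le_dist (f := Polynomial.toContinuousMapOnAlgHom _ P)
    (g := f) ⟨x, hx⟩
  have h3 : dist ((Polynomial.toContinuousMapOnAlgHom _ P) ⟨x, hx⟩) (f ⟨x, hx⟩)
      = |P.eval x - Real.sqrt x| := by
    rw [Real.dist_eq]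
    rfl
  rw [h3] at h2
  exact le_of_lt (lt_of_le_of_lt h2 (dist_comm f _ ▸ hdist))

end CStarCat
namespace CStarCat

variable {R : CStarCat}

lemma comp_pow'' {X Y : R.Obj} (u : R.Hom X Y) (p : R.Hom X X) (q : R.Hom Y Y)
    (h : R.comp u p = R.comp q u) (n : ℕ) :
    R.comp u (p ^ n) = R.comp (q ^ n) u := by
  induction n with
  | zero =>
    rw [pow_zero, pow_zero]
    show R.comp u (R.id X) = R.comp (R.id Y) u
    rw [R.comp_id, R.id_comp]
  | succ n ih =>
    rw [pow_succ, pow_succ]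
    show R.comp u (R.comp (p ^ n) p) = R.comp (R.comp (q ^ n) q) u
    rw [← R.comp_assoc, ih, R.comp_assoc, h, ← R.comp_assoc]

open Polynomial in
lemma comp_aeval'' {X Y : R.Obj} (u : R.Hom X Y) (p : R.Hom X X) (q : R.Hom Y Y)
    (h : R.comp u p = R.comp q u) (P : ℝ[X]) :
    R.comp u (Polynomial.aeval p P) = R.comp (Polynomial.aeval q P) u := by
  induction P using Polynomial.induction_on' with
  | add P₁ P₂ ih₁ ih₂ =>
    rw [map_add, map_add]
    show R.comp u (R.add _ _) = R.comp (R.add _ _) u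
    rw [R.comp_add_left, R.comp_add_right, ih₁, ih₂]
  | monomial n c =>
    rw [Polynomial.aeval_monomial, Polynomial.aeval_monomial,
      Algebra.algebraMap_eq_smul_one, Algebra.algebraMap_eq_smul_one,
      smul_mul_assoc, smul_mul_assoc, one_mul, one_mul,
      ← Complex.coe_smul, ← Complex.coe_smul, smul_def, smul_def,
      R.comp_smul_left, R.comp_smul_right, comp_pow'' u p q h n]

lemma comp_cfc_sqrt {X Y : R.Obj} (u : R.Hom X Y) (p : R.Hom X X) (q : R.Hom Y Y)
    (hp : IsSelfAdjoint p) (hq : IsSelfAdjoint q) {M : ℝ}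
    (hpM : spectrum ℝ p ⊆ Set.Icc 0 M) (hqM : spectrum ℝ q ⊆ Set.Icc 0 M)
    (h : R.comp u p = R.comp q u) :
    R.comp u (cfc Real.sqrt p) = R.comp (cfc Real.sqrt q) u := by
  have key : ∀ ε : ℝ, 0 < ε →
      ‖R.comp u (cfc Real.sqrt p) - R.comp (cfc Real.sqrt q) u‖ ≤ ε := by
    intro ε hε
    set K := R.norm u with hK
    have hK0 : 0 ≤ K := R.norm_nonneg' u
    set δ := ε / (K + K + 1) with hδ
    have hδ0 : 0 < δ := by positivity
    obtain ⟨P, hP⟩ := exists_poly_sqrt M δ hδ0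
    have e1 : ‖cfc Real.sqrt p - Polynomial.aeval p P‖ ≤ δ := by
      rw [← cfc_polynomial P p hp,
        ← cfc_sub Real.sqrt P.eval p Real.continuous_sqrt.continuousOn
          (Polynomial.continuous _).continuousOn]
      refine norm_cfc_le hδ0.le fun x hx => ?_
      rw [Real.norm_eq_abs, abs_sub_comm]
      exact hP x (hpM hx)
    have e2 : ‖Polynomial.aeval q P - cfc Real.sqrt q‖ ≤ δ := by
      rw [← cfc_polynomial P q hq,
        ← cfc_sub P.eval Real.sqrt q (Polynomial.continuous _).continuousOn
          Real.continuous_sqrt.continuousOn]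
      refine norm_cfc_le hδ0.le fun x hx => ?_
      rw [Real.norm_eq_abs]
      exact hP x (hqM hx)
    have e3 := comp_aeval'' u p q h P
    have e4 : R.comp u (cfc Real.sqrt p) - R.comp (cfc Real.sqrt q) u
        = R.comp u (cfc Real.sqrt p - Polynomial.aeval p P)
          + R.comp (Polynomial.aeval q P - cfc Real.sqrt q) u := by
      rw [comp_sub'', sub_comp'', e3]
      abel
    rw [e4]
    have b1 : ‖R.comp u (cfc Real.sqrt p - Polynomial.aeval p P)‖ ≤ K * δ := by
      refine le_trans (R.norm_comp_le _ _) ?_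
      exact mul_le_mul_of_nonneg_left e1 hK0
    have b2 : ‖R.comp (Polynomial.aeval q P - cfc Real.sqrt q) u‖ ≤ δ * K := by
      refine le_trans (R.norm_comp_le _ _) ?_
      exact mul_le_mul_of_nonneg_right e2 hK0
    refine le_trans (norm_add_le _ _) ?_
    have hfin : K * δ + δ * K ≤ ε := by
      have h1 : K * δ + δ * K = δ * (K + K) := by ring
      rw [h1, hδ]
      have h2 : ε / (K + K + 1) * (K + K) ≤ ε / (K + K + 1) * (K + K + 1) := by
        apply mul_le_mul_of_nonneg_left (by linarith) (by positivity)
      rw [div_mul_cancel₀] at h2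
      · exact h2
      · positivity
    linarith [b1, b2]
  have h0 : ‖R.comp u (cfc Real.sqrt p) - R.comp (cfc Real.sqrt q) u‖ ≤ 0 := by
    by_contra hc
    push_neg at hc
    have := key (‖R.comp u (cfc Real.sqrt p) - R.comp (cfc Real.sqrt q) u‖ / 2)
      (by linarith)
    linarith
  have h1 := le_antisymm h0 (norm_nonneg _)
  rwa [norm_eq_zero, sub_eq_zero] at h1

end CStarCat
/-- Naturality of the pointwise star of a natural transformation. -/
lemma star_nat {Q R : CStarCat} {φ ψ : SFun Q R} {Θ : NT φ ψ} (hΘ : IsNat φ ψ Θ)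
    {A B : Q.Obj} (f : Q.Hom A B) :
    R.comp (φ.map f) (R.star (Θ A)) = R.comp (R.star (Θ B)) (ψ.map f) := by
  have h := congrArg R.star (hΘ (Q.star f))
  rw [R.star_comp, R.star_comp, ψ.map_star, R.star_star, φ.map_star, R.star_star] at h
  exact h.symm

/-- **Bounded natural transformations of *-functors between small
C*-categories form a Longo-Roberts 2-C*-category**: vertical and horizontal
compositions and the pointwise involution preserve bounded natural
transformations, the supremum norm is submultiplicative for both compositions,
the C*-property `‖Φ^{*₁} ∘₁ Φ‖ = ‖Φ‖²` holds, `Φ^{*₁} ∘₁ Φ` is positive, each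
block of bounded natural transformations between a fixed pair of *-functors is
a complex vector space, and it is complete (a Banach space). -/
theorem bounded_natural_transformations_LR_two_cstar (Q R E : CStarCat) :
    -- vertical composition
    (∀ (φ ψ ξ : SFun Q R) (Θ : NT ψ ξ) (Ξ : NT φ ψ),
      IsNat ψ ξ Θ → IsNat φ ψ Ξ → Bdd ψ ξ Θ → Bdd φ ψ Ξ →
        IsNat φ ξ (vc Θ Ξ) ∧ Bdd φ ξ (vc Θ Ξ) ∧
        supNorm φ ξ (vc Θ Ξ) ≤ supNorm ψ ξ Θ * supNorm φ ψ Ξ) ∧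
    -- horizontal composition
    (∀ (φ₁ ψ₁ : SFun Q R) (φ₂ ψ₂ : SFun R E) (Θ : NT φ₁ ψ₁) (Ω : NT φ₂ ψ₂),
      IsNat φ₁ ψ₁ Θ → IsNat φ₂ ψ₂ Ω → Bdd φ₁ ψ₁ Θ → Bdd φ₂ ψ₂ Ω →
        IsNat (φ₂.fcomp φ₁) (ψ₂.fcomp ψ₁) (hc Ω Θ) ∧
        Bdd (φ₂.fcomp φ₁) (ψ₂.fcomp ψ₁) (hc Ω Θ) ∧
        supNorm (φ₂.fcomp φ₁) (ψ₂.fcomp ψ₁) (hc Ω Θ) ≤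
          supNorm φ₂ ψ₂ Ω * supNorm φ₁ ψ₁ Θ) ∧
    -- involution and C*-property
    (∀ (φ ψ : SFun Q R) (Θ : NT φ ψ), IsNat φ ψ Θ → Bdd φ ψ Θ →
      IsNat ψ φ (starN Θ) ∧ Bdd ψ φ (starN Θ) ∧
      supNorm ψ φ (starN Θ) = supNorm φ ψ Θ ∧
      supNorm φ φ (vc (starN Θ) Θ) = supNorm φ ψ Θ ^ 2) ∧
    -- linear structure of the blocks
    (∀ (φ ψ : SFun Q R) (Θ Ξ : NT φ ψ) (c : ℂ),
      IsNat φ ψ Θ → IsNat φ ψ Ξ → Bdd φ ψ Θ → Bdd φ ψ Ξ →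
        IsNat φ ψ (addN Θ Ξ) ∧ Bdd φ ψ (addN Θ Ξ) ∧
        IsNat φ ψ (smulN c Θ) ∧ Bdd φ ψ (smulN c Θ)) ∧
    -- completeness of the blocks (Banach spaces)
    (∀ (φ ψ : SFun Q R) (u : ℕ → NT φ ψ),
      (∀ k, IsNat φ ψ (u k) ∧ Bdd φ ψ (u k)) →
      (∀ ε : ℝ, 0 < ε → ∃ N, ∀ m k, N ≤ m → N ≤ k →
        supNorm φ ψ (addN (u m) (negN (u k))) ≤ ε) →
      ∃ L : NT φ ψ, IsNat φ ψ L ∧ Bdd φ ψ L ∧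
        ∀ ε : ℝ, 0 < ε → ∃ N, ∀ m, N ≤ m → supNorm φ ψ (addN (u m) (negN L)) ≤ ε) ∧
    -- positivity of `Φ^{*₁} ∘₁ Φ`
    (∀ (φ ψ : SFun Q R) (Θ : NT φ ψ), IsNat φ ψ Θ → Bdd φ ψ Θ →
      ∃ Ξ : NT φ φ, IsNat φ φ Ξ ∧ Bdd φ φ Ξ ∧
        vc (starN Θ) Θ = vc (starN Ξ) Ξ) := by
  refine ⟨?_, ?_, ?_, ?_, ?_, ?_⟩
  -- ## Part 1: vertical composition
  · intro φ ψ ξ Θ Ξ hΘ hΞ bΘ bΞ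
    have bound : ∀ A, R.norm ((vc Θ Ξ) A) ≤ supNorm ψ ξ Θ * supNorm φ ψ Ξ := by
      intro A
      refine le_trans (R.norm_comp_le _ _) ?_
      exact mul_le_mul (le_supNorm bΘ A) (le_supNorm bΞ A) (R.norm_nonneg' _)
        (supNorm_nonneg Θ)
    refine ⟨?_, ⟨_, bound⟩, supNorm_le (mul_nonneg (supNorm_nonneg Θ) (supNorm_nonneg Ξ)) bound⟩
    intro A B f
    show R.comp (ξ.map f) (R.comp (Θ A) (Ξ A)) = R.comp (R.comp (Θ B) (Ξ B)) (φ.map f)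
    rw [← R.comp_assoc, hΘ f, R.comp_assoc, hΞ f, ← R.comp_assoc]
  -- ## Part 2: horizontal composition
  · intro φ₁ ψ₁ φ₂ ψ₂ Θ Ω hΘ hΩ bΘ bΩ
    have bound : ∀ A, E.norm ((hc Ω Θ) A) ≤ supNorm φ₂ ψ₂ Ω * supNorm φ₁ ψ₁ Θ := by
      intro A
      refine le_trans (E.norm_comp_le _ _) ?_
      rw [mul_comm]
      exact mul_le_mul (le_supNorm bΩ _)
        (le_trans (ψ₂.norm_map_le _) (le_supNorm bΘ A)) (E.norm_nonneg' _)
        (supNorm_nonneg Ω)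
    refine ⟨?_, ⟨_, bound⟩,
      supNorm_le (mul_nonneg (supNorm_nonneg Ω) (supNorm_nonneg Θ)) bound⟩
    intro A B f
    show E.comp (ψ₂.map (ψ₁.map f)) (E.comp (ψ₂.map (Θ A)) (Ω (φ₁.obj A)))
      = E.comp (E.comp (ψ₂.map (Θ B)) (Ω (φ₁.obj B))) (φ₂.map (φ₁.map f))
    rw [← E.comp_assoc, ← ψ₂.map_comp, hΘ f, ψ₂.map_comp, E.comp_assoc,
      hΩ (φ₁.map f), ← E.comp_assoc]
  -- ## Part 3: involution and C*-property
  · intro φ ψ Θ hΘ bΘ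
    have hrange : (fun A => R.norm ((starN Θ) A)) = fun A => R.norm (Θ A) :=
      funext fun A => CStarCat.norm_star'' (Θ A)
    refine ⟨?_, ?_, ?_, ?_⟩
    · intro A B f
      exact star_nat hΘ f
    · obtain ⟨M, hM⟩ := bΘ
      exact ⟨M, fun A => by
        show R.norm (R.star (Θ A)) ≤ M
        rw [CStarCat.norm_star'']; exact hM A⟩
    · show sSup (Set.range fun A => R.norm ((starN Θ) A)) = _
      rw [hrange]; rfl
    · have e : (fun A => R.norm ((vc (starN Θ) Θ) A)) = fun A => R.norm (Θ A) ^ 2 :=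
        funext fun A => R.cstar_property (Θ A)
      calc supNorm φ φ (vc (starN Θ) Θ)
          = sSup (Set.range fun A => R.norm (Θ A) ^ 2) := by
            show sSup (Set.range fun A => R.norm ((vc (starN Θ) Θ) A)) = _
            rw [e]
        _ = supNorm φ ψ Θ ^ 2 :=
            sSup_sq_of_nonneg (fun A => R.norm (Θ A)) (fun A => R.norm_nonneg' _)
              (bddAbove_of_bdd bΘ)
  -- ## Part 4: linear structure
  · intro φ ψ Θ Ξ c hΘ hΞ bΘ bΞ
    obtain ⟨M₁, h₁⟩ := bΘ
    obtain ⟨M₂, h₂⟩ := bΞ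
    refine ⟨?_, ⟨M₁ + M₂, fun A => ?_⟩, ?_, ⟨‖c‖ * M₁, fun A => ?_⟩⟩
    · intro A B f
      show R.comp (ψ.map f) (R.add (Θ A) (Ξ A)) = R.comp (R.add (Θ B) (Ξ B)) (φ.map f)
      rw [R.comp_add_left, R.comp_add_right, hΘ f, hΞ f]
    · exact le_trans (R.norm_add_le' _ _) (add_le_add (h₁ A) (h₂ A))
    · intro A B f
      show R.comp (ψ.map f) (R.smul c (Θ A)) = R.comp (R.smul c (Θ B)) (φ.map f)
      rw [R.comp_smul_left, R.comp_smul_right, hΘ f]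
    · show R.norm (R.smul c (Θ A)) ≤ ‖c‖ * M₁
      rw [R.norm_smul']
      exact mul_le_mul_of_nonneg_left (h₁ A) (norm_nonneg c)
  -- ## Part 5: completeness
  · intro φ ψ u hk hC
    have hdiffBdd : ∀ m k, Bdd φ ψ (addN (u m) (negN (u k))) := by
      intro m k
      obtain ⟨M₁, h₁⟩ := (hk m).2
      obtain ⟨M₂, h₂⟩ := (hk k).2
      refine ⟨M₁ + M₂, fun A => le_trans (R.norm_add_le' _ _) (add_le_add (h₁ A) ?_)⟩
      show R.norm (R.neg (u k A)) ≤ M₂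
      rw [CStarCat.norm_neg'']; exact h₂ A
    have hpt : ∀ m k A, R.norm (R.add (u m A) (R.neg (u k A)))
        ≤ supNorm φ ψ (addN (u m) (negN (u k))) :=
      fun m k A => le_supNorm (hdiffBdd m k) A
    have hcauchy : ∀ A, ∃ l, ∀ ε : ℝ, 0 < ε → ∃ N, ∀ m, N ≤ m →
        R.norm (R.add (u m A) (R.neg l)) ≤ ε := by
      intro A
      apply R.complete
      intro ε hε
      obtain ⟨N, hN⟩ := hC ε hε
      exact ⟨N, fun m n hm hn => le_trans (hpt m n A) (hN m n hm hn)⟩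
    choose L hL using hcauchy
    have hLnat : IsNat φ ψ L := by
      intro A B f
      have key : ∀ ε : ℝ, 0 < ε →
          ‖R.comp (ψ.map f) (L A) - R.comp (L B) (φ.map f)‖ ≤ ε := by
        intro ε hε
        set Cst := R.norm (ψ.map f) + R.norm (φ.map f) with hCst
        have hCst0 : 0 ≤ Cst :=
          add_nonneg (R.norm_nonneg' _) (R.norm_nonneg' _)
        set δ := ε / (Cst + 1) with hδ
        have hδ0 : 0 < δ := by positivity
        obtain ⟨N₁, hN₁⟩ := hL A δ hδ0
        obtain ⟨N₂, hN₂⟩ := hL B δ hδ0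
        set m := max N₁ N₂ with hm
        have hnat := (hk m).1 f
        have e : R.comp (ψ.map f) (L A) - R.comp (L B) (φ.map f)
            = R.comp (ψ.map f) (L A - u m A) - R.comp (L B - u m B) (φ.map f) := by
          rw [CStarCat.comp_sub'', CStarCat.sub_comp'', hnat]
          abel
        rw [e]
        have d1 : ‖L A - u m A‖ ≤ δ := by
          calc ‖L A - u m A‖ = ‖u m A - L A‖ := norm_sub_rev _ _
            _ ≤ δ := hN₁ m (le_max_left _ _)
        have d2 : ‖L B - u m B‖ ≤ δ := by
          calc ‖L B - u m B‖ = ‖u m B - L B‖ := norm_sub_rev _ _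
            _ ≤ δ := hN₂ m (le_max_right _ _)
        have b1 : ‖R.comp (ψ.map f) (L A - u m A)‖ ≤ R.norm (ψ.map f) * δ :=
          le_trans (R.norm_comp_le _ _) (mul_le_mul_of_nonneg_left d1 (R.norm_nonneg' _))
        have b2 : ‖R.comp (L B - u m B) (φ.map f)‖ ≤ δ * R.norm (φ.map f) :=
          le_trans (R.norm_comp_le _ _) (mul_le_mul_of_nonneg_right d2 (R.norm_nonneg' _))
        have hfin : R.norm (ψ.map f) * δ + δ * R.norm (φ.map f) ≤ ε := by
          have h1 : R.norm (ψ.map f) * δ + δ * R.norm (φ.map f) = δ * Cst := by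
            rw [hCst]; ring
          rw [h1, hδ]
          have h2 : ε / (Cst + 1) * Cst ≤ ε / (Cst + 1) * (Cst + 1) :=
            mul_le_mul_of_nonneg_left (by linarith) (by positivity)
          rwa [div_mul_cancel₀ ε (by positivity : Cst + (1:ℝ) ≠ 0)] at h2
        exact le_trans (norm_sub_le _ _) (le_trans (add_le_add b1 b2) hfin)
      have h0 : ‖R.comp (ψ.map f) (L A) - R.comp (L B) (φ.map f)‖ ≤ 0 := by
        by_contra hcne
        push_neg at hcne
        have := key (‖R.comp (ψ.map f) (L A) - R.comp (L B) (φ.map f)‖ / 2) (by linarith)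
        linarith
      exact sub_eq_zero.mp (norm_eq_zero.mp (le_antisymm h0 (norm_nonneg _)))
    have hLBdd : Bdd φ ψ L := by
      obtain ⟨N, hN⟩ := hC 1 one_pos
      obtain ⟨MN, hMN⟩ := (hk N).2
      refine ⟨MN + 2, fun A => ?_⟩
      obtain ⟨N', hN'⟩ := hL A 1 one_pos
      set m := max N N' with hm
      have h1 : ‖L A - u m A‖ ≤ 1 := by
        calc ‖L A - u m A‖ = ‖u m A - L A‖ := norm_sub_rev _ _
          _ ≤ 1 := hN' m (le_max_right _ _)
      have h2 : ‖u m A - u N A‖ ≤ 1 :=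
        le_trans (hpt m N A) (hN m N (le_max_left _ _) le_rfl)
      calc R.norm (L A) = ‖(L A - u m A) + (u m A - u N A) + u N A‖ := by
            congr 1; abel
        _ ≤ ‖(L A - u m A) + (u m A - u N A)‖ + ‖u N A‖ := norm_add_le _ _
        _ ≤ ‖L A - u m A‖ + ‖u m A - u N A‖ + ‖u N A‖ := by
            have := norm_add_le (L A - u m A) (u m A - u N A)
            linarith
        _ ≤ 1 + 1 + MN := by
            have h3 : ‖u N A‖ ≤ MN := hMN A
            linarith
        _ = MN + 2 := by ring
    refine ⟨L, hLnat, hLBdd, ?_⟩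
    intro ε hε
    obtain ⟨N, hN⟩ := hC (ε / 2) (half_pos hε)
    refine ⟨N, fun m hm => ?_⟩
    refine supNorm_le hε.le fun A => ?_
    show R.norm (R.add (u m A) (R.neg (L A))) ≤ ε
    obtain ⟨N', hN'⟩ := hL A (ε / 2) (half_pos hε)
    set k := max N N' with hk'
    have h1 : ‖u m A - u k A‖ ≤ ε / 2 :=
      le_trans (hpt m k A) (hN m k hm (le_max_left _ _))
    have h2 : ‖u k A - L A‖ ≤ ε / 2 := hN' k (le_max_right _ _)
    calc R.norm (R.add (u m A) (R.neg (L A)))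
        = ‖(u m A - u k A) + (u k A - L A)‖ := by
          show ‖u m A - L A‖ = _
          congr 1; abel
      _ ≤ ‖u m A - u k A‖ + ‖u k A - L A‖ := norm_add_le _ _
      _ ≤ ε / 2 + ε / 2 := add_le_add h1 h2
      _ = ε := add_halves ε
  -- ## Part 6: positivity
  · intro φ ψ Θ hΘ bΘ
    set M := supNorm φ ψ Θ with hM
    have hM0 : 0 ≤ M := supNorm_nonneg Θ
    set P : NT φ φ := fun A => R.comp (R.star (Θ A)) (Θ A) with hP
    have hPsa : ∀ A, IsSelfAdjoint (P A) := by
      intro A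
      show Star.star (P A) = P A
      show R.star (R.comp (R.star (Θ A)) (Θ A)) = R.comp (R.star (Θ A)) (Θ A)
      rw [R.star_comp, R.star_star]
    have hPspec : ∀ A, spectrum ℝ (P A) ⊆ Set.Icc 0 (M ^ 2) := by
      intro A
      obtain ⟨g, hg⟩ := R.positivity (Θ A)
      have hnn : ∀ x ∈ spectrum ℝ (P A), 0 ≤ x := by
        have hg' : P A = Star.star g * g := hg
        rw [hg']
        exact spectrum_star_mul_self_nonneg
      refine CStarCat.spectrum_subset_Icc hnn ?_
      calc R.norm (P A) = R.norm (Θ A) ^ 2 := R.cstar_property (Θ A)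
        _ ≤ M ^ 2 := pow_le_pow_left₀ (R.norm_nonneg' _) (le_supNorm bΘ A) 2
    have hcompP : ∀ {A B : Q.Obj} (f : Q.Hom A B),
        R.comp (φ.map f) (P A) = R.comp (P B) (φ.map f) := by
      intro A B f
      calc R.comp (φ.map f) (R.comp (R.star (Θ A)) (Θ A))
          = R.comp (R.comp (φ.map f) (R.star (Θ A))) (Θ A) := (R.comp_assoc _ _ _).symm
        _ = R.comp (R.comp (R.star (Θ B)) (ψ.map f)) (Θ A) := by rw [star_nat hΘ f]
        _ = R.comp (R.star (Θ B)) (R.comp (ψ.map f) (Θ A)) := R.comp_assoc _ _ _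
        _ = R.comp (R.star (Θ B)) (R.comp (Θ B) (φ.map f)) := by rw [hΘ f]
        _ = R.comp (R.comp (R.star (Θ B)) (Θ B)) (φ.map f) := (R.comp_assoc _ _ _).symm
    refine ⟨fun A => cfc Real.sqrt (P A), ?_, ?_, ?_⟩
    · intro A B f
      exact CStarCat.comp_cfc_sqrt (φ.map f) (P A) (P B) (hPsa A) (hPsa B)
        (hPspec A) (hPspec B) (hcompP f)
    · refine ⟨Real.sqrt (M ^ 2), fun A => ?_⟩
      show ‖cfc Real.sqrt (P A)‖ ≤ Real.sqrt (M ^ 2)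
      refine norm_cfc_le (Real.sqrt_nonneg _) fun x hx => ?_
      rw [Real.norm_eq_abs, abs_of_nonneg (Real.sqrt_nonneg x)]
      exact Real.sqrt_le_sqrt (hPspec A hx).2
    · funext A
      have hsa : R.star (cfc Real.sqrt (P A)) = cfc Real.sqrt (P A) :=
        (cfc_predicate Real.sqrt (P A)).star_eq
      have hmul : cfc Real.sqrt (P A) * cfc Real.sqrt (P A) = P A := by
        rw [← cfc_mul Real.sqrt Real.sqrt (P A) Real.continuous_sqrt.continuousOn
          Real.continuous_sqrt.continuousOn]
        have heq : (spectrum ℝ (P A)).EqOn (fun x => Real.sqrt x * Real.sqrt x) id :=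
          fun x hx => Real.mul_self_sqrt (hPspec A hx).1
        rw [cfc_congr heq, cfc_id ℝ (P A) (hPsa A)]
      show R.comp (R.star (Θ A)) (Θ A)
        = R.comp (R.star (cfc Real.sqrt (P A))) (cfc Real.sqrt (P A))
      rw [hsa]
      exact hmul.symm
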